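/- arXiv:2404.12480 — 2 statements merged into one kernel-verified Lean document; each statement's English description precedes it below -/
import Mathlib

section
/- Let z_τ : [t_{i-1}, t_i] → ℝ^d be a polynomial of degree ≤ k, H ∈ C¹(ℝ^d) with gradient η, and let Π denote the L²-orthogonal projection onto ℝ^d-valued polynomials of degree ≤ k-1 on [t_{i-1}, t_i]. Then H(z_τ(t_i)) - H(z_τ(t_{i-1})) = ∫_{t_{i-1}}^{t_i} ⟨Π η(z_τ(t)), ∂ₜ z_τ(t)⟩ dt. -/
open MeasureTheory RealInnerProductSpace

/-- Key identity for discrete energy consistency: since `∂ₜ z_τ` has degree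
≤ k-1, the chain rule combines with the defining property of the
L²-projection `Π` tested against `∂ₜ z_τ`. -/
theorem projected_chain_rule {d k : ℕ} (hk : 1 ≤ k) (t₀ t₁ : ℝ) (hlt : t₀ < t₁)
    (H : EuclideanSpace ℝ (Fin d) → ℝ) (hH : ContDiff ℝ 1 H)
    (η : EuclideanSpace ℝ (Fin d) → EuclideanSpace ℝ (Fin d)) (hη : η = gradient H)
    (z Pη : ℝ → EuclideanSpace ℝ (Fin d))
    -- z is a polynomial of degree ≤ k
    (hz : ∃ a : Fin (k + 1) → EuclideanSpace ℝ (Fin d),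
      ∀ s, z s = ∑ j : Fin (k + 1), s ^ (j : ℕ) • a j)
    -- Pη is a polynomial of degree ≤ k-1
    (hPη : ∃ c : Fin k → EuclideanSpace ℝ (Fin d),
      ∀ s, Pη s = ∑ j : Fin k, s ^ (j : ℕ) • c j)
    -- Pη is the L²-orthogonal projection of η ∘ z onto degree ≤ k-1 polynomials
    (horth : ∀ c : Fin k → EuclideanSpace ℝ (Fin d),
      ∫ s in t₀..t₁, ⟪η (z s) - Pη s, ∑ j : Fin k, s ^ (j : ℕ) • c j⟫ = 0) :
    H (z t₁) - H (z t₀) = ∫ s in t₀..t₁, ⟪Pη s, deriv z s⟫ := by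
  obtain ⟨a, ha⟩ := hz
  obtain ⟨c, hc⟩ := hPη
  have hzfun : z = fun s => ∑ j : Fin (k + 1), s ^ (j : ℕ) • a j := funext ha
  subst hzfun
  set b : Fin k → EuclideanSpace ℝ (Fin d) := fun j => ((j : ℝ) + 1) • a j.succ with hb
  set D : ℝ → EuclideanSpace ℝ (Fin d) := fun s => ∑ j : Fin k, s ^ (j : ℕ) • b j with hD
  -- derivative of z
  have hderiv : ∀ s, HasDerivAt (fun s => ∑ j : Fin (k + 1), s ^ (j : ℕ) • a j) (D s) s := by
    intro s
    have h1 : HasDerivAt (fun s => ∑ j : Fin (k + 1), s ^ (j : ℕ) • a j)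
        (∑ j : Fin (k + 1), (((j : ℕ) : ℝ) * s ^ ((j : ℕ) - 1)) • a j) s :=
      HasDerivAt.fun_sum fun j _ => (hasDerivAt_pow (j : ℕ) s).smul_const (a j)
    have h2 : (∑ j : Fin (k + 1), (((j : ℕ) : ℝ) * s ^ ((j : ℕ) - 1)) • a j) = D s := by
      rw [hD, Fin.sum_univ_succ]
      simp only [Fin.val_zero, Nat.cast_zero, zero_mul, zero_smul, zero_add]
      refine Finset.sum_congr rfl fun j _ => ?_
      rw [Fin.val_succ, Nat.add_sub_cancel, hb, mul_comm, mul_smul]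
      push_cast
      ring_nf
    rwa [h2] at h1
  have hderiv' : ∀ s, deriv (fun s => ∑ j : Fin (k + 1), s ^ (j : ℕ) • a j) s = D s :=
    fun s => (hderiv s).deriv
  -- continuity facts
  have hηcont : Continuous η := by
    rw [hη]
    have h1 : Continuous (fderiv ℝ H) := hH.continuous_fderiv one_ne_zero
    show Continuous fun x =>
      (InnerProductSpace.toDual ℝ (EuclideanSpace ℝ (Fin d))).symm (fderiv ℝ H x)
    fun_prop
  have hzcont : Continuous (fun s : ℝ => ∑ j : Fin (k + 1), s ^ (j : ℕ) • a j) := by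
    apply continuous_finset_sum
    intro j _
    exact (continuous_pow (j : ℕ)).smul continuous_const
  have hDcont : Continuous D := by
    rw [hD]
    apply continuous_finset_sum
    intro j _
    exact (continuous_pow (j : ℕ)).smul continuous_const
  have hPηcont : Continuous Pη := by
    rw [funext hc]
    apply continuous_finset_sum
    intro j _
    exact (continuous_pow (j : ℕ)).smul continuous_const
  -- chain rule
  have hchain : ∀ s, HasDerivAt (fun t => H (∑ j : Fin (k + 1), t ^ (j : ℕ) • a j))
      ⟪η ((fun s => ∑ j : Fin (k + 1), s ^ (j : ℕ) • a j) s), D s⟫ s := by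
    intro s
    set x := (fun s => ∑ j : Fin (k + 1), s ^ (j : ℕ) • a j) s
    have hdiff : DifferentiableAt ℝ H x := (hH.differentiable one_ne_zero).differentiableAt
    have hg : HasGradientAt H (η x) x := by rw [hη]; exact hdiff.hasGradientAt
    have hf : HasFDerivAt H (InnerProductSpace.toDual ℝ (EuclideanSpace ℝ (Fin d)) (η x)) x := hg.hasFDerivAt
    have := hf.comp_hasDerivAt s (hderiv s)
    simp only [InnerProductSpace.toDual_apply_apply] at this
    exact this
  -- FTC
  have hFTC : ∫ s in t₀..t₁, ⟪η ((fun s => ∑ j : Fin (k + 1), s ^ (j : ℕ) • a j) s), D s⟫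
      = H (∑ j : Fin (k + 1), t₁ ^ (j : ℕ) • a j) - H (∑ j : Fin (k + 1), t₀ ^ (j : ℕ) • a j) := by
    refine intervalIntegral.integral_eq_sub_of_hasDerivAt (fun s _ => hchain s) ?_
    exact ((hηcont.comp hzcont).inner hDcont).intervalIntegrable t₀ t₁
  -- split the integral using orthogonality
  have hint1 : IntervalIntegrable
      (fun s => ⟪η ((fun s => ∑ j : Fin (k + 1), s ^ (j : ℕ) • a j) s) - Pη s, D s⟫) volume t₀ t₁ :=
    (((hηcont.comp hzcont).sub hPηcont).inner hDcont).intervalIntegrable t₀ t₁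
  have hint2 : IntervalIntegrable (fun s => ⟪Pη s, D s⟫) volume t₀ t₁ :=
    (hPηcont.inner hDcont).intervalIntegrable t₀ t₁
  have horthb := horth b
  have hsplit : ∫ s in t₀..t₁, ⟪η ((fun s => ∑ j : Fin (k + 1), s ^ (j : ℕ) • a j) s), D s⟫
      = (∫ s in t₀..t₁, ⟪η ((fun s => ∑ j : Fin (k + 1), s ^ (j : ℕ) • a j) s) - Pη s, D s⟫)
        + ∫ s in t₀..t₁, ⟪Pη s, D s⟫ := by
    rw [← intervalIntegral.integral_add hint1 hint2]
    refine intervalIntegral.integral_congr fun s _ => ?_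
    simp [inner_sub_left]
  rw [hsplit, horthb, zero_add] at hFTC
  simp only [hderiv']
  exact hFTC.symm
end

section
/- Let z_τ : [t_{i-1},t_i] → ℝ^d be a polynomial of degree ≤ k solving the cPG scheme ∫_{t_{i-1}}^{t_i} ⟨∂ₜ z_τ, φ⟩ dt = Q_i[⟨J(Π η(z_τ)) - R(Π η(z_τ)) + B(·, Π η(z_τ)), φ⟩] for all polynomials φ of degree ≤ k-1, where Q_i is a quadrature with positive weights, ⟨J(v),v⟩ = 0 and ⟨R(v),v⟩ ≥ 0 for all v, and Π is the L²-projection to degree ≤ k-1. Then H(z_τ(t_i)) - H(z_τ(t_{i-1})) = Q_i[-⟨R(Π η(z_τ)), Π η(z_τ)⟩ + ⟨B(·, Π η(z_τ)), Π η(z_τ)⟩] ≤ Q_i[⟨B(·, Π η(z_τ)), Π η(z_τ)⟩]. -/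
open MeasureTheory RealInnerProductSpace

/-- Discrete energy consistency of the modified continuous Petrov--Galerkin
scheme on one time step `[t₀, t₁]`, with quadrature
`Q_i g = (t₁ - t₀) * ∑ j, ω j * g (ζ j)` (positive weights summing to 1). -/
theorem cPG_discrete_energy_balance {d k sQ : ℕ} (hk : 1 ≤ k)
    (t₀ t₁ : ℝ) (hlt : t₀ < t₁)
    (ω : Fin sQ → ℝ) (hω : ∀ j, 0 < ω j) (hωsum : ∑ j, ω j = 1)
    (ζ : Fin sQ → ℝ) (hζ : ∀ j, ζ j ∈ Set.Icc t₀ t₁)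
    (H : EuclideanSpace ℝ (Fin d) → ℝ) (hH : ContDiff ℝ 1 H)
    (η : EuclideanSpace ℝ (Fin d) → EuclideanSpace ℝ (Fin d)) (hη : η = gradient H)
    (J R : EuclideanSpace ℝ (Fin d) → EuclideanSpace ℝ (Fin d))
    (hJ : ∀ v, ⟪J v, v⟫ = 0) (hR : ∀ v, 0 ≤ ⟪R v, v⟫)
    (B : ℝ → EuclideanSpace ℝ (Fin d) → EuclideanSpace ℝ (Fin d))
    (z Pη : ℝ → EuclideanSpace ℝ (Fin d))
    -- z is a polynomial of degree ≤ k
    (hz : ∃ a : Fin (k + 1) → EuclideanSpace ℝ (Fin d),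
      ∀ s, z s = ∑ j : Fin (k + 1), s ^ (j : ℕ) • a j)
    -- Pη is a polynomial of degree ≤ k-1
    (hPη : ∃ c : Fin k → EuclideanSpace ℝ (Fin d),
      ∀ s, Pη s = ∑ j : Fin k, s ^ (j : ℕ) • c j)
    -- Pη is the L²-projection of η ∘ z onto polynomials of degree ≤ k-1
    (horth : ∀ c : Fin k → EuclideanSpace ℝ (Fin d),
      ∫ s in t₀..t₁, ⟪η (z s) - Pη s, ∑ j : Fin k, s ^ (j : ℕ) • c j⟫ = 0)
    -- z solves the cPG scheme for all test polynomials of degree ≤ k-1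
    (hscheme : ∀ c : Fin k → EuclideanSpace ℝ (Fin d),
      ∫ s in t₀..t₁, ⟪deriv z s, ∑ j : Fin k, s ^ (j : ℕ) • c j⟫
        = (t₁ - t₀) * ∑ i, ω i *
            ⟪J (Pη (ζ i)) - R (Pη (ζ i)) + B (ζ i) (Pη (ζ i)),
              ∑ j : Fin k, (ζ i) ^ (j : ℕ) • c j⟫) :
    H (z t₁) - H (z t₀)
      = (t₁ - t₀) * ∑ i, ω i *
          (-⟪R (Pη (ζ i)), Pη (ζ i)⟫ + ⟪B (ζ i) (Pη (ζ i)), Pη (ζ i)⟫) ∧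
    H (z t₁) - H (z t₀)
      ≤ (t₁ - t₀) * ∑ i, ω i * ⟪B (ζ i) (Pη (ζ i)), Pη (ζ i)⟫ := by
  obtain ⟨a, ha⟩ := hz
  obtain ⟨c, hc⟩ := hPη
  -- coefficients of the derivative of z
  set c' : Fin k → EuclideanSpace ℝ (Fin d) :=
    fun j => (((j : ℕ) : ℝ) + 1) • a j.succ with hc'
  set Dz : ℝ → EuclideanSpace ℝ (Fin d) :=
    fun s => ∑ j : Fin k, s ^ (j : ℕ) • c' j with hDz
  have hzderiv : ∀ s, HasDerivAt z (Dz s) s := by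
    intro s
    have h1 : HasDerivAt (fun s => ∑ j : Fin (k+1), s ^ (j : ℕ) • a j)
        (∑ j : Fin (k+1), (((j : ℕ) : ℝ) * s ^ ((j : ℕ) - 1)) • a j) s :=
      HasDerivAt.fun_sum fun j _ => (hasDerivAt_pow (j : ℕ) s).smul_const (a j)
    have hz' : z = fun s => ∑ j : Fin (k+1), s ^ (j : ℕ) • a j := funext ha
    rw [hz']
    convert h1 using 1
    rw [Fin.sum_univ_succ]
    simp [hDz, hc', smul_smul, mul_comm, mul_assoc, mul_left_comm]
  have hderivz : deriv z = Dz := funext fun s => (hzderiv s).deriv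
  -- continuity facts
  have hzc : Continuous z := by
    rw [funext ha]
    exact continuous_finset_sum _ fun j _ => (continuous_pow _).smul continuous_const
  have hDzc : Continuous Dz := by
    exact continuous_finset_sum _ fun j _ => (continuous_pow _).smul continuous_const
  have hPηc : Continuous Pη := by
    rw [funext hc]
    exact continuous_finset_sum _ fun j _ => (continuous_pow _).smul continuous_const
  have hηc : Continuous η := by
    rw [hη]
    exact (InnerProductSpace.toDual ℝ _).symm.continuous.comp (hH.continuous_fderiv one_ne_zero)
  -- fundamental theorem of calculus
  have hFTC : H (z t₁) - H (z t₀) = ∫ s in t₀..t₁, ⟪η (z s), Dz s⟫ := by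
    have hder : ∀ s ∈ Set.uIcc t₀ t₁, HasDerivAt (H ∘ z) ⟪η (z s), Dz s⟫ s := by
      intro s _
      have hg : HasGradientAt H (η (z s)) (z s) := by
        rw [hη]; exact (hH.differentiable one_ne_zero (z s)).hasGradientAt
      have := hg.hasFDerivAt.comp_hasDerivAt s (hzderiv s)
      simpa [InnerProductSpace.toDual_apply_apply] using this
    have hint : IntervalIntegrable (fun s => ⟪η (z s), Dz s⟫) volume t₀ t₁ :=
      (((hηc.comp hzc).inner hDzc)).intervalIntegrable t₀ t₁
    rw [intervalIntegral.integral_eq_sub_of_hasDerivAt hder hint]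
    rfl
  -- use orthogonality to replace η ∘ z by Pη
  have hkey : (∫ s in t₀..t₁, ⟪η (z s), Dz s⟫) = ∫ s in t₀..t₁, ⟪Pη s, Dz s⟫ := by
    have h0 : (∫ s in t₀..t₁, ⟪η (z s) - Pη s, Dz s⟫) = 0 := by
      simpa [hDz] using horth c'
    have hint1 : IntervalIntegrable (fun s => ⟪η (z s) - Pη s, Dz s⟫) volume t₀ t₁ :=
      ((((hηc.comp hzc).sub hPηc).inner hDzc)).intervalIntegrable t₀ t₁
    have hint2 : IntervalIntegrable (fun s => ⟪Pη s, Dz s⟫) volume t₀ t₁ :=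
      ((hPηc.inner hDzc)).intervalIntegrable t₀ t₁
    have hsplit : (fun s => ⟪η (z s), Dz s⟫)
        = fun s => ⟪η (z s) - Pη s, Dz s⟫ + ⟪Pη s, Dz s⟫ := by
      funext s; rw [inner_sub_left]; ring
    rw [hsplit, intervalIntegral.integral_add hint1 hint2, h0, zero_add]
  -- use the scheme
  have hs := hscheme c
  rw [hderivz] at hs
  have hPηrw : ∀ s, (∑ j : Fin k, s ^ (j : ℕ) • c j) = Pη s := fun s => (hc s).symm
  have hmain : H (z t₁) - H (z t₀)
      = (t₁ - t₀) * ∑ i, ω i *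
        (-⟪R (Pη (ζ i)), Pη (ζ i)⟫ + ⟪B (ζ i) (Pη (ζ i)), Pη (ζ i)⟫) := by
    rw [hFTC, hkey]
    have hL : (∫ s in t₀..t₁, ⟪Pη s, Dz s⟫) = ∫ s in t₀..t₁, ⟪Dz s, ∑ j : Fin k, s ^ (j : ℕ) • c j⟫ := by
      congr 1; funext s; rw [hPηrw, real_inner_comm]
    rw [hL, hs]
    congr 1
    apply Finset.sum_congr rfl
    intro i _
    rw [hPηrw]
    rw [inner_add_left, inner_sub_left, hJ]
    ring
  refine ⟨hmain, hmain ▸ ?_⟩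
  apply mul_le_mul_of_nonneg_left _ (sub_pos.mpr hlt).le
  apply Finset.sum_le_sum
  intro i _
  have hr := hR (Pη (ζ i))
  have := (hω i).le
  nlinarith
end
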